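/- Quantum degenerate Garnier system G(5), commutativity of the two Hamiltonian flows (Theorem 4.1, case 7): define K1 = 2q1q2p1 + q2p1^2 + 2q2^2p2 − 2q1p2 + 2t2·q2p1 + 2p1p2 + 2α1·q2 + 2t1·p1 + 2t2·p2, and K2 = q2^2p1^2 + 2q1^2p1 + 2q1q2p2 − q1p1^2 + 2q2p1p2 + 2t1·q2p1 + 2t2·q2p2 − t2·p1^2 + p2^2 + 2α1·q1 − 2t2^2·p1 + 2t1·p2. Then K1·K2 = K2·K1; i.e. the quantum G(5) Hamiltonians H1 = K1/(3h+2α1−2α2) and H2 = K2/(3h+2α1−2α2), whose denominator is central, commute. -/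
import Mathlib


set_option maxHeartbeats 4000000 in
/-- Quantum degenerate Garnier system G(5): commutativity of the two Hamiltonian flows. -/
theorem quantum_garnier_G5_commute
    {R : Type*} [Ring R]
    (h α1 α2 t1 t2 : R)
    (hh : ∀ r : R, h * r = r * h)
    (hA1 : ∀ r : R, α1 * r = r * α1)
    (hA2 : ∀ r : R, α2 * r = r * α2)
    (ht1 : ∀ r : R, t1 * r = r * t1)
    (ht2 : ∀ r : R, t2 * r = r * t2)
    (q1 p1 q2 p2 : R)
    (hq1p1 : q1 * p1 - p1 * q1 = h)
    (hq2p2 : q2 * p2 - p2 * q2 = h)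
    (hq1q2 : q1 * q2 - q2 * q1 = 0)
    (hp1p2 : p1 * p2 - p2 * p1 = 0)
    (hq1p2 : q1 * p2 - p2 * q1 = 0)
    (hq2p1 : q2 * p1 - p1 * q2 = 0)
    (K1 K2 : R)
    (hK1 : K1 =
      2 * q1 * q2 * p1 + q2 * p1^2 + 2 * q2^2 * p2 - 2 * q1 * p2
      + 2 * t2 * q2 * p1 + 2 * p1 * p2 + 2 * α1 * q2 + 2 * t1 * p1 + 2 * t2 * p2)
    (hK2 : K2 =
      q2^2 * p1^2 + 2 * q1^2 * p1 + 2 * q1 * q2 * p2 - q1 * p1^2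
      + 2 * q2 * p1 * p2 + 2 * t1 * q2 * p1 + 2 * t2 * q2 * p2
      - t2 * p1^2 + p2^2 + 2 * α1 * q1 - 2 * t2^2 * p1 + 2 * t1 * p2) :
    K1 * K2 = K2 * K1 := by
  have s0 : q2 * q1 = q1 * q2 := (sub_eq_zero.mp hq1q2).symm
  have s1 : ∀ x : R, q2 * (q1 * x) = q1 * (q2 * x) := fun x => by rw [← mul_assoc, s0, mul_assoc]
  have s2 : p1 * q2 = q2 * p1 := (sub_eq_zero.mp hq2p1).symm
  have s3 : ∀ x : R, p1 * (q2 * x) = q2 * (p1 * x) := fun x => by rw [← mul_assoc, s2, mul_assoc]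
  have s4 : p2 * q1 = q1 * p2 := (sub_eq_zero.mp hq1p2).symm
  have s5 : ∀ x : R, p2 * (q1 * x) = q1 * (p2 * x) := fun x => by rw [← mul_assoc, s4, mul_assoc]
  have s6 : p2 * p1 = p1 * p2 := (sub_eq_zero.mp hp1p2).symm
  have s7 : ∀ x : R, p2 * (p1 * x) = p1 * (p2 * x) := fun x => by rw [← mul_assoc, s6, mul_assoc]
  have s8 : p1 * q1 = q1 * p1 - h := by rw [← hq1p1]; abel
  have s9 : ∀ x : R, p1 * (q1 * x) = q1 * (p1 * x) - h * x := fun x => by rw [← mul_assoc, s8, sub_mul, mul_assoc]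
  have s10 : p2 * q2 = q2 * p2 - h := by rw [← hq2p2]; abel
  have s11 : ∀ x : R, p2 * (q2 * x) = q2 * (p2 * x) - h * x := fun x => by rw [← mul_assoc, s10, sub_mul, mul_assoc]
  have s12 : q1 * h = h * q1 := (hh q1).symm
  have s13 : ∀ x : R, q1 * (h * x) = h * (q1 * x) := fun x => by rw [← mul_assoc, s12, mul_assoc]
  have s14 : q2 * h = h * q2 := (hh q2).symm
  have s15 : ∀ x : R, q2 * (h * x) = h * (q2 * x) := fun x => by rw [← mul_assoc, s14, mul_assoc]
  have s16 : p1 * h = h * p1 := (hh p1).symm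
  have s17 : ∀ x : R, p1 * (h * x) = h * (p1 * x) := fun x => by rw [← mul_assoc, s16, mul_assoc]
  have s18 : p2 * h = h * p2 := (hh p2).symm
  have s19 : ∀ x : R, p2 * (h * x) = h * (p2 * x) := fun x => by rw [← mul_assoc, s18, mul_assoc]
  have s20 : q1 * α1 = α1 * q1 := (hA1 q1).symm
  have s21 : ∀ x : R, q1 * (α1 * x) = α1 * (q1 * x) := fun x => by rw [← mul_assoc, s20, mul_assoc]
  have s22 : q2 * α1 = α1 * q2 := (hA1 q2).symm
  have s23 : ∀ x : R, q2 * (α1 * x) = α1 * (q2 * x) := fun x => by rw [← mul_assoc, s22, mul_assoc]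
  have s24 : p1 * α1 = α1 * p1 := (hA1 p1).symm
  have s25 : ∀ x : R, p1 * (α1 * x) = α1 * (p1 * x) := fun x => by rw [← mul_assoc, s24, mul_assoc]
  have s26 : p2 * α1 = α1 * p2 := (hA1 p2).symm
  have s27 : ∀ x : R, p2 * (α1 * x) = α1 * (p2 * x) := fun x => by rw [← mul_assoc, s26, mul_assoc]
  have s28 : q1 * t1 = t1 * q1 := (ht1 q1).symm
  have s29 : ∀ x : R, q1 * (t1 * x) = t1 * (q1 * x) := fun x => by rw [← mul_assoc, s28, mul_assoc]
  have s30 : q2 * t1 = t1 * q2 := (ht1 q2).symm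
  have s31 : ∀ x : R, q2 * (t1 * x) = t1 * (q2 * x) := fun x => by rw [← mul_assoc, s30, mul_assoc]
  have s32 : p1 * t1 = t1 * p1 := (ht1 p1).symm
  have s33 : ∀ x : R, p1 * (t1 * x) = t1 * (p1 * x) := fun x => by rw [← mul_assoc, s32, mul_assoc]
  have s34 : p2 * t1 = t1 * p2 := (ht1 p2).symm
  have s35 : ∀ x : R, p2 * (t1 * x) = t1 * (p2 * x) := fun x => by rw [← mul_assoc, s34, mul_assoc]
  have s36 : q1 * t2 = t2 * q1 := (ht2 q1).symm
  have s37 : ∀ x : R, q1 * (t2 * x) = t2 * (q1 * x) := fun x => by rw [← mul_assoc, s36, mul_assoc]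
  have s38 : q2 * t2 = t2 * q2 := (ht2 q2).symm
  have s39 : ∀ x : R, q2 * (t2 * x) = t2 * (q2 * x) := fun x => by rw [← mul_assoc, s38, mul_assoc]
  have s40 : p1 * t2 = t2 * p1 := (ht2 p1).symm
  have s41 : ∀ x : R, p1 * (t2 * x) = t2 * (p1 * x) := fun x => by rw [← mul_assoc, s40, mul_assoc]
  have s42 : p2 * t2 = t2 * p2 := (ht2 p2).symm
  have s43 : ∀ x : R, p2 * (t2 * x) = t2 * (p2 * x) := fun x => by rw [← mul_assoc, s42, mul_assoc]
  have s44 : α1 * h = h * α1 := hA1 h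
  have s45 : ∀ x : R, α1 * (h * x) = h * (α1 * x) := fun x => by rw [← mul_assoc, s44, mul_assoc]
  have s46 : t1 * h = h * t1 := ht1 h
  have s47 : ∀ x : R, t1 * (h * x) = h * (t1 * x) := fun x => by rw [← mul_assoc, s46, mul_assoc]
  have s48 : t2 * h = h * t2 := ht2 h
  have s49 : ∀ x : R, t2 * (h * x) = h * (t2 * x) := fun x => by rw [← mul_assoc, s48, mul_assoc]
  have s50 : t1 * α1 = α1 * t1 := ht1 α1
  have s51 : ∀ x : R, t1 * (α1 * x) = α1 * (t1 * x) := fun x => by rw [← mul_assoc, s50, mul_assoc]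
  have s52 : t2 * α1 = α1 * t2 := ht2 α1
  have s53 : ∀ x : R, t2 * (α1 * x) = α1 * (t2 * x) := fun x => by rw [← mul_assoc, s52, mul_assoc]
  have s54 : t2 * t1 = t1 * t2 := ht2 t1
  have s55 : ∀ x : R, t2 * (t1 * x) = t1 * (t2 * x) := fun x => by rw [← mul_assoc, s54, mul_assoc]
  subst hK1 hK2
  simp only [pow_two, two_mul, mul_add, add_mul, mul_sub, sub_mul, mul_assoc,
    s0, s1, s2, s3, s4, s5, s6, s7, s8, s9, s10, s11, s12, s13, s14, s15, s16, s17, s18, s19, s20, s21, s22, s23, s24, s25, s26, s27, s28, s29, s30, s31, s32, s33, s34, s35, s36, s37, s38, s39, s40, s41, s42, s43, s44, s45, s46, s47, s48, s49, s50, s51, s52, s53, s54, s55]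
  abel
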